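/- arXiv:2310.08789 — 4 statements merged into one kernel-verified Lean document; each statement's English description precedes it below -/
import Mathlib

section
/- Let K ≥ 1, let A be a real K×K matrix with operator norm ‖A‖ < 1, let R be a symmetric positive definite K×K matrix, and let Σ₀ be a symmetric positive definite K×K matrix. Define Σ_t = (A Σ_{t−1} Aᵀ + R)(A Σ_{t−1} Aᵀ + R + I)⁻¹ for t ≥ 1. Then the sequence (Σ_t) converges: there exists a K×K matrix Σ* such that Σ_t → Σ* (entrywise, equivalently in operator norm) as t → ∞. -/
open Matrix Filter RealInnerProductSpace

/-- The operator norm of a real `K × K` matrix induced by the Euclidean norm on `ℝ^K`. -/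
noncomputable def opNorm {K : ℕ} (A : Matrix (Fin K) (Fin K) ℝ) : ℝ :=
  ‖Matrix.toEuclideanCLM (𝕜 := ℝ) A‖

section Aux

variable {K : ℕ}

private noncomputable abbrev TT {K : ℕ} :
    Matrix (Fin K) (Fin K) ℝ ≃⋆ₐ[ℝ] (EuclideanSpace ℝ (Fin K) →L[ℝ] EuclideanSpace ℝ (Fin K)) :=
  Matrix.toEuclideanCLM (𝕜 := ℝ)

/-- For a positive semidefinite real matrix, the associated operator is positive. -/
private lemma inner_TT_nonneg {M : Matrix (Fin K) (Fin K) ℝ} (hM : M.PosSemidef)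
    (x : EuclideanSpace ℝ (Fin K)) : 0 ≤ @inner ℝ _ _ (TT M x) x := by
  open scoped MatrixOrder Matrix.Norms.L2Operator in
  obtain ⟨B, rfl⟩ := CStarAlgebra.nonneg_iff_eq_star_mul_self.mp hM.nonneg
  rw [Matrix.star_eq_conjTranspose]
  have hstar : TT Bᴴ = star (TT B) := by
    rw [← Matrix.star_eq_conjTranspose, map_star]
  have h1 : TT (Bᴴ * B) x = (ContinuousLinearMap.adjoint (TT B)) (TT B x) := by
    rw [_root_.map_mul, hstar, ContinuousLinearMap.star_eq_adjoint]
    rfl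
  rw [h1, ContinuousLinearMap.adjoint_inner_left]
  exact real_inner_self_nonneg

private lemma psd_add_one_posDef {M : Matrix (Fin K) (Fin K) ℝ} (hM : M.PosSemidef) :
    (M + 1).PosDef :=
  Matrix.PosDef.posSemidef_add hM Matrix.PosDef.one

private lemma mul_inv_eq_one_sub_inv {M : Matrix (Fin K) (Fin K) ℝ} (hM : M.PosSemidef) :
    M * (M + 1)⁻¹ = 1 - (M + 1)⁻¹ := by
  have hN := psd_add_one_posDef hM
  have h1 : (M + 1) * (M + 1)⁻¹ = 1 := Matrix.mul_nonsing_inv _ hN.det_pos.ne'.isUnit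
  rw [add_mul, one_mul] at h1
  exact eq_sub_of_add_eq h1

/-- `1 - (M+1)⁻¹` is positive semidefinite when `M` is positive semidefinite. -/
private lemma one_sub_inv_posSemidef {M : Matrix (Fin K) (Fin K) ℝ} (hM : M.PosSemidef) :
    (1 - (M + 1)⁻¹).PosSemidef := by
  have hN := psd_add_one_posDef hM
  have hdet : IsUnit (M + 1).det := hN.det_pos.ne'.isUnit
  refine Matrix.PosSemidef.of_dotProduct_mulVec_nonneg ?_ ?_
  · exact Matrix.IsHermitian.sub (Matrix.isHermitian_one) hN.isHermitian.inv
  · intro x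
    have hx : (M + 1) *ᵥ ((M + 1)⁻¹ *ᵥ x) = x := by
      rw [Matrix.mulVec_mulVec, Matrix.mul_nonsing_inv _ hdet, Matrix.one_mulVec]
    set y := (M + 1)⁻¹ *ᵥ x with hy
    have hxy : x = M *ᵥ y + y := by
      rw [← hx, Matrix.add_mulVec, Matrix.one_mulVec]
    have h1 : star x ⬝ᵥ ((1 - (M + 1)⁻¹) *ᵥ x) = x ⬝ᵥ (x - y) := by
      rw [star_trivial, Matrix.sub_mulVec, Matrix.one_mulVec, dotProduct_sub]
    rw [h1]
    have hxmy : x - y = M *ᵥ y := by rw [hxy]; abel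
    rw [hxmy, hxy, add_dotProduct]
    have h2 : 0 ≤ (M *ᵥ y) ⬝ᵥ (M *ᵥ y) := by
      unfold dotProduct
      exact Finset.sum_nonneg fun i _ => mul_self_nonneg _
    have h3 : 0 ≤ y ⬝ᵥ (M *ᵥ y) := by
      have := hM.dotProduct_mulVec_nonneg y
      rwa [star_trivial] at this
    linarith

/-- The operator norm of `(M+1)⁻¹` is at most `1` when `M` is positive semidefinite. -/
private lemma norm_TT_inv_le_one {M : Matrix (Fin K) (Fin K) ℝ} (hM : M.PosSemidef) :
    ‖TT ((M + 1)⁻¹)‖ ≤ 1 := by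
  have hN := psd_add_one_posDef hM
  have hdet : IsUnit (M + 1).det := hN.det_pos.ne'.isUnit
  refine ContinuousLinearMap.opNorm_le_bound _ zero_le_one fun y => ?_
  rw [one_mul]
  set x := TT ((M + 1)⁻¹) y with hx
  have hxy : TT M x + x = y := by
    have hmul : TT (M + 1) * TT ((M + 1)⁻¹) = 1 := by
      rw [← _root_.map_mul, Matrix.mul_nonsing_inv _ hdet, _root_.map_one]
    have h1 : TT (M + 1) (TT ((M + 1)⁻¹) y) = y := by
      have h2 := congrArg
        (fun (L : EuclideanSpace ℝ (Fin K) →L[ℝ] EuclideanSpace ℝ (Fin K)) => L y) hmul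
      simpa [ContinuousLinearMap.mul_apply] using h2
    rw [map_add, _root_.map_one] at h1
    simpa using h1
  have hnorm : ‖y‖ ^ 2 = ‖TT M x‖ ^ 2 + 2 * @inner ℝ _ _ (TT M x) x + ‖x‖ ^ 2 := by
    rw [← real_inner_self_eq_norm_sq y, ← hxy, real_inner_add_add_self,
      real_inner_self_eq_norm_sq, real_inner_self_eq_norm_sq]
  have hpos := inner_TT_nonneg hM x
  have h2 : ‖x‖ ^ 2 ≤ ‖y‖ ^ 2 := by nlinarith [sq_nonneg ‖TT M x‖]
  nlinarith [norm_nonneg x, norm_nonneg y]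

private lemma matInvSubInv {X Y : Matrix (Fin K) (Fin K) ℝ} (hX : IsUnit X.det)
    (hY : IsUnit Y.det) : X⁻¹ - Y⁻¹ = X⁻¹ * ((Y - X) * Y⁻¹) := by
  have h1 : Y * Y⁻¹ = 1 := Matrix.mul_nonsing_inv _ hY
  have h2 : X⁻¹ * X = 1 := Matrix.nonsing_inv_mul _ hX
  calc X⁻¹ - Y⁻¹ = X⁻¹ * (Y * Y⁻¹) - (X⁻¹ * X) * Y⁻¹ := by rw [h1, h2]; simp
    _ = X⁻¹ * ((Y - X) * Y⁻¹) := by noncomm_ring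

end Aux

set_option maxHeartbeats 1000000 in
/-- convergence of the Riccati sequence
`Σ_t = (A Σ_{t−1} Aᵀ + R)(A Σ_{t−1} Aᵀ + R + I)⁻¹`, starting from a symmetric positive
definite `Σ₀`, when `‖A‖ < 1` and `R` is symmetric positive definite. -/
theorem riccati_converges {K : ℕ} (hK : 1 ≤ K)
    (A R S0 : Matrix (Fin K) (Fin K) ℝ)
    (hA : opNorm A < 1) (hR : R.PosDef) (hS0 : S0.PosDef)
    (S : ℕ → Matrix (Fin K) (Fin K) ℝ)
    (hinit : S 0 = S0)
    (hrec : ∀ t : ℕ, S (t + 1) = (A * S t * Aᵀ + R) * (A * S t * Aᵀ + R + 1)⁻¹) :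
    ∃ Sstar : Matrix (Fin K) (Fin K) ℝ, Tendsto S atTop (nhds Sstar) := by
  -- the "pre-measurement" matrices
  set M : ℕ → Matrix (Fin K) (Fin K) ℝ := fun t => A * S t * Aᵀ + R with hMdef
  -- positivity invariant
  have hpsd : ∀ t, (S t).PosSemidef := by
    intro t
    induction t with
    | zero => rw [hinit]; exact hS0.posSemidef
    | succ n ih =>
      have hAS : (A * S n * Aᵀ).PosSemidef := by
        have := ih.mul_mul_conjTranspose_same A
        rwa [Matrix.conjTranspose_eq_transpose_of_trivial] at this
      have hMn : (M n).PosSemidef := (Matrix.PosDef.posSemidef_add hAS hR).posSemidef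
      rw [hrec n, show A * S n * Aᵀ + R = M n from rfl, mul_inv_eq_one_sub_inv hMn]
      exact one_sub_inv_posSemidef hMn
  have hMpsd : ∀ t, (M t).PosSemidef := by
    intro t
    have hAS : (A * S t * Aᵀ).PosSemidef := by
      have := (hpsd t).mul_mul_conjTranspose_same A
      rwa [Matrix.conjTranspose_eq_transpose_of_trivial] at this
    exact (Matrix.PosDef.posSemidef_add hAS hR).posSemidef
  have hMdet : ∀ t, IsUnit (M t + 1).det := fun t =>
    (psd_add_one_posDef (hMpsd t)).det_pos.ne'.isUnit
  have hSrec : ∀ t, S (t + 1) = 1 - (M t + 1)⁻¹ := by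
    intro t
    rw [hrec t, show A * S t * Aᵀ + R = M t from rfl, mul_inv_eq_one_sub_inv (hMpsd t)]
  -- the CLM sequence
  set f : ℕ → (EuclideanSpace ℝ (Fin K) →L[ℝ] EuclideanSpace ℝ (Fin K)) :=
    fun n => TT (S n) with hfdef
  set q : ℝ := ‖TT A‖ * ‖TT A‖ with hqdef
  have hAnn : 0 ≤ ‖TT A‖ := norm_nonneg _
  have hA1 : ‖TT A‖ < 1 := hA
  have hq0 : 0 ≤ q := mul_nonneg hAnn hAnn
  have hq1 : q < 1 := by nlinarith
  have hAt : ‖TT Aᵀ‖ = ‖TT A‖ := by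
    have h1 : TT Aᵀ = ContinuousLinearMap.adjoint (TT A) := by
      rw [← ContinuousLinearMap.star_eq_adjoint, ← map_star, Matrix.star_eq_conjTranspose,
        Matrix.conjTranspose_eq_transpose_of_trivial]
    rw [h1]
    exact ContinuousLinearMap.adjoint.norm_map (TT A)
  -- contraction step
  have key : ∀ n, ‖f (n + 1 + 1) - f (n + 1)‖ ≤ q * ‖f (n + 1) - f n‖ := by
    intro n
    have e1 : S (n + 1 + 1) - S (n + 1) = (M n + 1)⁻¹ - (M (n + 1) + 1)⁻¹ := by
      rw [hSrec (n + 1), hSrec n]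
      abel
    have e2 : (M (n + 1) + 1) - (M n + 1) = A * (S (n + 1) - S n) * Aᵀ := by
      simp only [hMdef]
      noncomm_ring
    have hdiff : S (n + 1 + 1) - S (n + 1) =
        (M n + 1)⁻¹ * ((A * (S (n + 1) - S n) * Aᵀ) * (M (n + 1) + 1)⁻¹) := by
      rw [e1, matInvSubInv (hMdet n) (hMdet (n + 1)), e2]
    have hTd : f (n + 1 + 1) - f (n + 1) =
        TT ((M n + 1)⁻¹) * (TT A * TT (S (n + 1) - S n) * TT Aᵀ * TT ((M (n + 1) + 1)⁻¹)) := by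
      simp only [hfdef, ← map_sub, hdiff, _root_.map_mul]
    have hfd : TT (S (n + 1) - S n) = f (n + 1) - f n := by
      simp only [hfdef, map_sub]
    rw [hTd, hfd]
    set P := TT ((M n + 1)⁻¹) with hPdef
    set Q := TT ((M (n + 1) + 1)⁻¹) with hQdef
    set d := f (n + 1) - f n with hddef
    have hP : ‖P‖ ≤ 1 := norm_TT_inv_le_one (hMpsd n)
    have hQ : ‖Q‖ ≤ 1 := norm_TT_inv_le_one (hMpsd (n + 1))
    calc ‖P * (TT A * d * TT Aᵀ * Q)‖
        ≤ ‖P‖ * ‖TT A * d * TT Aᵀ * Q‖ := norm_mul_le _ _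
      _ ≤ 1 * (‖TT A‖ * ‖d‖ * ‖TT A‖ * 1) := by
          refine mul_le_mul hP ?_ (norm_nonneg _) zero_le_one
          calc ‖TT A * d * TT Aᵀ * Q‖
              ≤ ‖TT A * d * TT Aᵀ‖ * ‖Q‖ := norm_mul_le _ _
            _ ≤ (‖TT A‖ * ‖d‖ * ‖TT A‖) * 1 := by
                refine mul_le_mul ?_ hQ (norm_nonneg _) (by positivity)
                calc ‖TT A * d * TT Aᵀ‖
                    ≤ ‖TT A * d‖ * ‖TT Aᵀ‖ := norm_mul_le _ _
                  _ = ‖TT A * d‖ * ‖TT A‖ := by rw [hAt]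
                  _ ≤ (‖TT A‖ * ‖d‖) * ‖TT A‖ :=
                      mul_le_mul_of_nonneg_right (norm_mul_le _ _) hAnn
      _ = q * ‖d‖ := by rw [hqdef]; ring
  -- geometric bound ⇒ Cauchy
  set C : ℝ := dist (f 0) (f 1) with hCdef
  have hgeom : ∀ n, dist (f n) (f (n + 1)) ≤ C * q ^ n := by
    intro n
    induction n with
    | zero => simp [hCdef]
    | succ m ih =>
      have h1 : dist (f (m + 1)) (f (m + 1 + 1)) = ‖f (m + 1 + 1) - f (m + 1)‖ := by
        rw [dist_comm, dist_eq_norm]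
      have h2 : ‖f (m + 1) - f m‖ = dist (f m) (f (m + 1)) := by
        rw [dist_comm, dist_eq_norm]
      calc dist (f (m + 1)) (f (m + 1 + 1)) = ‖f (m + 1 + 1) - f (m + 1)‖ := h1
        _ ≤ q * ‖f (m + 1) - f m‖ := key m
        _ = q * dist (f m) (f (m + 1)) := by rw [h2]
        _ ≤ q * (C * q ^ m) := by exact mul_le_mul_of_nonneg_left ih hq0
        _ = C * q ^ (m + 1) := by ring
  have hcauchy : CauchySeq f := cauchySeq_of_le_geometric q C hq1 hgeom
  obtain ⟨L, hL⟩ := cauchySeq_tendsto_of_complete hcauchy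
  -- transport back to matrices
  let Linv : (EuclideanSpace ℝ (Fin K) →L[ℝ] EuclideanSpace ℝ (Fin K)) →ₗ[ℝ]
      Matrix (Fin K) (Fin K) ℝ :=
    { toFun := fun x => (TT (K := K)).symm x
      map_add' := fun x y => map_add _ x y
      map_smul' := fun c x => map_smul _ c x }
  have hcont : Continuous Linv := Linv.continuous_of_finiteDimensional
  refine ⟨Linv L, ?_⟩
  have hcomp : Tendsto (fun n => Linv (f n)) atTop (nhds (Linv L)) :=
    (hcont.tendsto L).comp hL
  have heq : (fun n => Linv (f n)) = S := by
    funext n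
    simp only [hfdef, Linv, LinearMap.coe_mk, AddHom.coe_mk]
    exact (TT (K := K)).symm_apply_apply (S n)
  rwa [heq] at hcomp
end

section
/- Let A be a real K×K matrix, let R be a symmetric positive definite K×K matrix with smallest eigenvalue λ > 0, and let Σ₀ be symmetric positive definite. Define Σ_t = (A Σ_{t−1} Aᵀ + R)(A Σ_{t−1} Aᵀ + R + I)⁻¹ for t ≥ 1. Then for all t ≥ 0 and n ≥ 0, ‖Σ_{t+n} − Σ_t‖ ≤ (‖A‖/(1 + λ))^{2t} · ‖Σ_n − Σ₀‖. In particular, if ‖A‖ < 1 the sequence (Σ_t) is Cauchy in operator norm. -/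
open Matrix

section Helpers

open scoped RealInnerProductSpace

set_option maxHeartbeats 1000000
set_option synthInstance.maxHeartbeats 1000000

variable {K : ℕ}

lemma opNorm_nonneg' (A : Matrix (Fin K) (Fin K) ℝ) : 0 ≤ opNorm A := norm_nonneg _

lemma opNorm_mul_le' (A B : Matrix (Fin K) (Fin K) ℝ) :
    opNorm (A * B) ≤ opNorm A * opNorm B := by
  unfold opNorm; rw [_root_.map_mul]; exact norm_mul_le _ _

lemma opNorm_transpose (A : Matrix (Fin K) (Fin K) ℝ) : opNorm Aᵀ = opNorm A := by
  have h : Aᵀ = Aᴴ := by ext i j; simp [conjTranspose_apply]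
  unfold opNorm
  rw [h, ← star_eq_conjTranspose, map_star, ContinuousLinearMap.star_eq_adjoint]
  exact ContinuousLinearMap.adjoint.norm_map _

lemma opNorm_one_le : opNorm (1 : Matrix (Fin K) (Fin K) ℝ) ≤ 1 := by
  unfold opNorm; rw [_root_.map_one]; exact ContinuousLinearMap.norm_id_le

lemma opNorm_sub_le' (A B : Matrix (Fin K) (Fin K) ℝ) :
    opNorm (A - B) ≤ opNorm A + opNorm B := by
  unfold opNorm; rw [map_sub]; exact norm_sub_le _ _

lemma opNorm_sub_rev (A B : Matrix (Fin K) (Fin K) ℝ) :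
    opNorm (A - B) = opNorm (B - A) := by
  unfold opNorm; rw [map_sub, map_sub]; exact norm_sub_rev _ _

lemma opNorm_sub_self (A : Matrix (Fin K) (Fin K) ℝ) : opNorm (A - A) = 0 := by
  unfold opNorm; rw [sub_self, map_zero, norm_zero]

lemma inner_toEuclideanCLM (P : Matrix (Fin K) (Fin K) ℝ) (x : EuclideanSpace ℝ (Fin K)) :
    ⟪(Matrix.toEuclideanCLM (𝕜 := ℝ) P) x, x⟫
      = star (WithLp.equiv 2 _ x) ⬝ᵥ (P *ᵥ (WithLp.equiv 2 _ x)) := by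
  rw [real_inner_comm, EuclideanSpace.inner_eq_star_dotProduct, ofLp_toEuclideanCLM,
    dotProduct_comm]
  rfl

lemma smul_one_posDef {c : ℝ} (hc : 0 < c) :
    (c • (1 : Matrix (Fin K) (Fin K) ℝ)).PosDef := by
  have h : c • (1 : Matrix (Fin K) (Fin K) ℝ) = diagonal (fun _ => c) := by
    ext i j; by_cases h : i = j <;> simp [h, Matrix.smul_apply, Matrix.one_apply, diagonal]
  rw [h]
  exact posDef_diagonal_iff.mpr fun _ => hc

lemma shifted_posDef {M : Matrix (Fin K) (Fin K) ℝ} {c : ℝ} (hc : 0 < c)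
    (hM : (M - c • 1).PosSemidef) : M.PosDef := by
  have h : M = c • (1 : Matrix (Fin K) (Fin K) ℝ) + (M - c • 1) := by abel
  rw [h]
  exact (smul_one_posDef hc).add_posSemidef hM

lemma coercive {M : Matrix (Fin K) (Fin K) ℝ} {c : ℝ}
    (hM : (M - c • 1).PosSemidef) (x : EuclideanSpace ℝ (Fin K)) :
    c * ‖x‖ ≤ ‖(Matrix.toEuclideanCLM (𝕜 := ℝ) M) x‖ := by
  have h0 : 0 ≤ ⟪(Matrix.toEuclideanCLM (𝕜 := ℝ) (M - c • 1)) x, x⟫ := by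
    rw [inner_toEuclideanCLM]; exact hM.dotProduct_mulVec_nonneg _
  have h1 : (Matrix.toEuclideanCLM (𝕜 := ℝ) (M - c • 1)) x
      = (Matrix.toEuclideanCLM (𝕜 := ℝ) M) x - c • x := by
    rw [map_sub, _root_.map_smul, _root_.map_one]
    simp
  rw [h1, inner_sub_left, real_inner_smul_left, real_inner_self_eq_norm_sq, sub_nonneg] at h0
  have h2 : ⟪(Matrix.toEuclideanCLM (𝕜 := ℝ) M) x, x⟫
      ≤ ‖(Matrix.toEuclideanCLM (𝕜 := ℝ) M) x‖ * ‖x‖ := real_inner_le_norm _ _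
  rcases eq_or_lt_of_le (norm_nonneg x) with h | h
  · simp [← h]
  · nlinarith

lemma shifted_inv_facts {M : Matrix (Fin K) (Fin K) ℝ} {c : ℝ} (hc : 0 < c)
    (hM : (M - c • 1).PosSemidef) :
    M * M⁻¹ = 1 ∧ M⁻¹ * M = 1 ∧ opNorm M⁻¹ ≤ 1 / c := by
  have hdet : IsUnit M.det := isUnit_iff_ne_zero.mpr (shifted_posDef hc hM).det_pos.ne'
  have h1 : M * M⁻¹ = 1 := Matrix.mul_nonsing_inv _ hdet
  have h2 : M⁻¹ * M = 1 := Matrix.nonsing_inv_mul _ hdet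
  refine ⟨h1, h2, ?_⟩
  apply ContinuousLinearMap.opNorm_le_bound _ (by positivity)
  intro x
  set y := (Matrix.toEuclideanCLM (𝕜 := ℝ) M⁻¹) x with hy
  have hMy : (Matrix.toEuclideanCLM (𝕜 := ℝ) M) y = x := by
    rw [hy, ← ContinuousLinearMap.mul_apply, ← _root_.map_mul, h1, _root_.map_one,
      ContinuousLinearMap.one_apply]
  have := coercive hM y
  rw [hMy] at this
  rw [div_mul_eq_mul_div, le_div_iff₀ hc, mul_comm]
  linarith

end Helpers

section Riccati

open scoped RealInnerProductSpace

set_option maxHeartbeats 1000000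
set_option synthInstance.maxHeartbeats 1000000

variable {K : ℕ} {A R : Matrix (Fin K) (Fin K) ℝ} {lam : ℝ}

/-- `A X Aᵀ + R + 1 - (1+λ)•1` is PSD whenever `X` is PSD and `R - λ•1` is PSD. -/
lemma step_shift (hRlam : (R - lam • 1).PosSemidef) {X : Matrix (Fin K) (Fin K) ℝ}
    (hX : X.PosSemidef) :
    ((A * X * Aᵀ + R + 1) - (1 + lam) • 1).PosSemidef := by
  have hAXA : (A * X * Aᵀ).PosSemidef := by
    have h : Aᵀ = Aᴴ := by ext i j; simp [conjTranspose_apply]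
    rw [h]; exact hX.mul_mul_conjTranspose_same A
  have h : (A * X * Aᵀ + R + 1) - (1 + lam) • 1 = (A * X * Aᵀ) + (R - lam • 1) := by
    rw [add_smul, one_smul]; abel
  rw [h]
  exact hAXA.add hRlam

lemma transpose_eq_conjTranspose (B : Matrix (Fin K) (Fin K) ℝ) : Bᵀ = Bᴴ := by
  ext i j; simp [conjTranspose_apply]

lemma step_facts (hR : R.PosDef) (hRlam : (R - lam • 1).PosSemidef)
    (hlam : 0 < lam) {X : Matrix (Fin K) (Fin K) ℝ} (hX : X.PosSemidef) :
    ((A * X * Aᵀ + R) * (A * X * Aᵀ + R + 1)⁻¹).PosSemidef ∧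
      (A * X * Aᵀ + R) * (A * X * Aᵀ + R + 1)⁻¹ = 1 - (A * X * Aᵀ + R + 1)⁻¹ := by
  have hc : (0:ℝ) < 1 + lam := by linarith
  obtain ⟨hP1, hP2, -⟩ := shifted_inv_facts hc (step_shift hRlam hX)
  set N : Matrix (Fin K) (Fin K) ℝ := A * X * Aᵀ + R with hN
  set P : Matrix (Fin K) (Fin K) ℝ := N + 1 with hP
  have hAXA : (A * X * Aᵀ).PosSemidef := by
    rw [transpose_eq_conjTranspose]; exact hX.mul_mul_conjTranspose_same A
  have hNpsd : N.PosSemidef := hAXA.add hR.posSemidef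
  have hPinv : P⁻¹.PosDef := (shifted_posDef hc (step_shift hRlam hX)).inv
  have hcomm : P⁻¹ * N = N * P⁻¹ := by
    calc P⁻¹ * N = P⁻¹ * N * (P * P⁻¹) := by rw [hP1, mul_one]
    _ = P⁻¹ * (N * P) * P⁻¹ := by noncomm_ring
    _ = P⁻¹ * (P * N) * P⁻¹ := by rw [hP]; congr 1; noncomm_ring
    _ = (P⁻¹ * P) * (N * P⁻¹) := by noncomm_ring
    _ = N * P⁻¹ := by rw [hP2, one_mul]
  have hkey : N * P⁻¹ = P⁻¹ * (Nᴴ * N + N) * (P⁻¹)ᴴ := by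
    rw [hPinv.isHermitian, hNpsd.isHermitian]
    calc N * P⁻¹ = P⁻¹ * N := hcomm.symm
    _ = P⁻¹ * N * (P * P⁻¹) := by rw [hP1, mul_one]
    _ = P⁻¹ * (N * P) * P⁻¹ := by noncomm_ring
    _ = P⁻¹ * (N * N + N) * P⁻¹ := by rw [hP]; congr 1; noncomm_ring
  constructor
  · rw [hkey]
    exact ((posSemidef_conjTranspose_mul_self N).add hNpsd).mul_mul_conjTranspose_same P⁻¹
  · calc N * P⁻¹ = (P - 1) * P⁻¹ := by rw [hP]; congr 1; abel
    _ = P * P⁻¹ - P⁻¹ := by rw [Matrix.sub_mul, one_mul]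
    _ = 1 - P⁻¹ := by rw [hP1]

/-- contraction step: difference identity. -/
lemma diff_identity (hR : R.PosDef) (hRlam : (R - lam • 1).PosSemidef)
    (hlam : 0 < lam) {X Y : Matrix (Fin K) (Fin K) ℝ}
    (hX : X.PosSemidef) (hY : Y.PosSemidef) :
    opNorm ((A * X * Aᵀ + R) * (A * X * Aᵀ + R + 1)⁻¹
        - (A * Y * Aᵀ + R) * (A * Y * Aᵀ + R + 1)⁻¹)
      ≤ (opNorm A / (1 + lam)) ^ 2 * opNorm (X - Y) := by
  have hc : (0:ℝ) < 1 + lam := by linarith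
  obtain ⟨hX1, hX2, hXn⟩ := shifted_inv_facts hc (step_shift (A := A) hRlam hX)
  obtain ⟨hY1, hY2, hYn⟩ := shifted_inv_facts hc (step_shift (A := A) hRlam hY)
  set PX : Matrix (Fin K) (Fin K) ℝ := A * X * Aᵀ + R + 1 with hPX
  set PY : Matrix (Fin K) (Fin K) ℝ := A * Y * Aᵀ + R + 1 with hPY
  obtain ⟨-, heX⟩ := step_facts hR hRlam hlam hX (A := A)
  obtain ⟨-, heY⟩ := step_facts hR hRlam hlam hY (A := A)
  have hdiff : (A * X * Aᵀ + R) * PX⁻¹ - (A * Y * Aᵀ + R) * PY⁻¹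
      = PX⁻¹ * (A * (X - Y) * Aᵀ) * PY⁻¹ := by
    rw [heX, heY]
    have h1 : A * (X - Y) * Aᵀ = PX - PY := by
      rw [hPX, hPY, Matrix.mul_sub, Matrix.sub_mul]; abel
    rw [h1]
    calc (1 - PX⁻¹) - (1 - PY⁻¹) = PY⁻¹ - PX⁻¹ := by abel
    _ = PX⁻¹ * (PX - PY) * PY⁻¹ := by
        rw [Matrix.mul_sub, Matrix.sub_mul, hX2, Matrix.mul_assoc PX⁻¹ PY PY⁻¹, hY1,
          Matrix.mul_one, one_mul]
  rw [hdiff]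
  have hn1 : opNorm (PX⁻¹ * (A * (X - Y) * Aᵀ) * PY⁻¹)
      ≤ opNorm PX⁻¹ * (opNorm A * opNorm (X - Y) * opNorm Aᵀ) * opNorm PY⁻¹ := by
    calc opNorm (PX⁻¹ * (A * (X - Y) * Aᵀ) * PY⁻¹)
        ≤ opNorm (PX⁻¹ * (A * (X - Y) * Aᵀ)) * opNorm PY⁻¹ := opNorm_mul_le' _ _
    _ ≤ (opNorm PX⁻¹ * opNorm (A * (X - Y) * Aᵀ)) * opNorm PY⁻¹ := by
        apply mul_le_mul_of_nonneg_right (opNorm_mul_le' _ _) (opNorm_nonneg' _)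
    _ ≤ (opNorm PX⁻¹ * (opNorm (A * (X - Y)) * opNorm Aᵀ)) * opNorm PY⁻¹ := by
        apply mul_le_mul_of_nonneg_right _ (opNorm_nonneg' _)
        exact mul_le_mul_of_nonneg_left (opNorm_mul_le' _ _) (opNorm_nonneg' _)
    _ ≤ (opNorm PX⁻¹ * ((opNorm A * opNorm (X - Y)) * opNorm Aᵀ)) * opNorm PY⁻¹ := by
        apply mul_le_mul_of_nonneg_right _ (opNorm_nonneg' _)
        apply mul_le_mul_of_nonneg_left _ (opNorm_nonneg' _)
        exact mul_le_mul_of_nonneg_right (opNorm_mul_le' _ _) (opNorm_nonneg' _)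
    _ = opNorm PX⁻¹ * (opNorm A * opNorm (X - Y) * opNorm Aᵀ) * opNorm PY⁻¹ := by ring
  have hrw : opNorm Aᵀ = opNorm A := opNorm_transpose A
  rw [hrw] at hn1
  have hA0 := opNorm_nonneg' A
  have hD0 := opNorm_nonneg' (X - Y)
  have hX0 := opNorm_nonneg' PX⁻¹
  have hY0 := opNorm_nonneg' PY⁻¹
  calc opNorm (PX⁻¹ * (A * (X - Y) * Aᵀ) * PY⁻¹)
      ≤ opNorm PX⁻¹ * (opNorm A * opNorm (X - Y) * opNorm A) * opNorm PY⁻¹ := hn1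
  _ ≤ (1 / (1 + lam)) * (opNorm A * opNorm (X - Y) * opNorm A) * (1 / (1 + lam)) := by
      have hz : 0 ≤ opNorm A * opNorm (X - Y) * opNorm A := by positivity
      have := mul_le_mul (mul_le_mul_of_nonneg_right hXn hz) hYn hY0 (by positivity)
      exact this
  _ = (opNorm A / (1 + lam)) ^ 2 * opNorm (X - Y) := by
      field_simp

lemma sub_smallest_eig_psd (hR : R.PosDef)
    (hlam : IsLeast (Set.range hR.1.eigenvalues) lam) : (R - lam • 1).PosSemidef := by
  obtain ⟨-, hlb⟩ := hlam
  set U : Matrix (Fin K) (Fin K) ℝ := (hR.1.eigenvectorUnitary : Matrix (Fin K) (Fin K) ℝ) with hUdef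
  have hU : U * star U = 1 := mem_unitaryGroup_iff.mp (hR.1.eigenvectorUnitary).2
  have key : R - lam • 1
      = U * (diagonal (RCLike.ofReal ∘ hR.1.eigenvalues) - lam • 1) * star U := by
    conv_lhs => rw [hR.1.spectral_theorem, Unitary.conjStarAlgAut_apply]
    rw [Matrix.mul_sub, Matrix.sub_mul]
    congr 1
    rw [mul_smul_comm, smul_mul_assoc, Matrix.mul_one, hU]
  have hdiag : diagonal (RCLike.ofReal ∘ hR.1.eigenvalues) - lam • (1 : Matrix (Fin K) (Fin K) ℝ)
      = diagonal (fun i => hR.1.eigenvalues i - lam) := by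
    ext i j
    by_cases h : i = j <;>
      simp [h, diagonal, Matrix.sub_apply, Matrix.smul_apply, Matrix.one_apply]
  rw [key, hdiag, star_eq_conjTranspose]
  exact (Matrix.PosSemidef.diagonal fun i => sub_nonneg.mpr (hlb ⟨i, rfl⟩)
    ).mul_mul_conjTranspose_same U


end Riccati

/-- geometric contraction of the Riccati sequence
`Σ_t = (A Σ_{t−1} Aᵀ + R)(A Σ_{t−1} Aᵀ + R + I)⁻¹`:
`‖Σ_{t+n} − Σ_t‖ ≤ (‖A‖/(1 + λ))^{2t} ‖Σ_n − Σ₀‖`, where `λ > 0` is the smallest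
eigenvalue of `R`; in particular if `‖A‖ < 1` the sequence is Cauchy in operator norm. -/
theorem riccati_contraction {K : ℕ}
    (A R S0 : Matrix (Fin K) (Fin K) ℝ) (lam : ℝ)
    (hR : R.PosDef) (hS0 : S0.PosDef)
    (hlam_pos : 0 < lam)
    (hlam : IsLeast (Set.range hR.1.eigenvalues) lam)
    (S : ℕ → Matrix (Fin K) (Fin K) ℝ)
    (hinit : S 0 = S0)
    (hrec : ∀ t : ℕ, S (t + 1) = (A * S t * Aᵀ + R) * (A * S t * Aᵀ + R + 1)⁻¹) :
    (∀ t n : ℕ, opNorm (S (t + n) - S t) ≤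
        (opNorm A / (1 + lam)) ^ (2 * t) * opNorm (S n - S 0)) ∧
      (opNorm A < 1 →
        ∀ ε : ℝ, 0 < ε → ∃ N : ℕ, ∀ s t : ℕ, N ≤ s → N ≤ t →
          opNorm (S s - S t) < ε) := by
  have hRlam : (R - lam • 1).PosSemidef := sub_smallest_eig_psd hR hlam
  have hc : (0:ℝ) < 1 + lam := by linarith
  have hPSD : ∀ t, (S t).PosSemidef := by
    intro t; induction t with
    | zero => rw [hinit]; exact hS0.posSemidef
    | succ t ih => rw [hrec t]; exact (step_facts hR hRlam hlam_pos ih).1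
  have hq0 : 0 ≤ opNorm A / (1 + lam) := div_nonneg (opNorm_nonneg' A) hc.le
  have main : ∀ t n : ℕ, opNorm (S (t + n) - S t) ≤
      (opNorm A / (1 + lam)) ^ (2 * t) * opNorm (S n - S 0) := by
    intro t n
    induction t with
    | zero => simp
    | succ t ih =>
      have h1 : t + 1 + n = (t + n) + 1 := by omega
      rw [h1, hrec (t + n), hrec t]
      have hstep := diff_identity (A := A) hR hRlam hlam_pos (hPSD (t + n)) (hPSD t)
      have h2 : (opNorm A / (1 + lam)) ^ 2 * opNorm (S (t + n) - S t)
          ≤ (opNorm A / (1 + lam)) ^ 2 * ((opNorm A / (1 + lam)) ^ (2 * t) * opNorm (S n - S 0)) :=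
        mul_le_mul_of_nonneg_left ih (by positivity)
      have h3 : (opNorm A / (1 + lam)) ^ 2 * ((opNorm A / (1 + lam)) ^ (2 * t) * opNorm (S n - S 0))
          = (opNorm A / (1 + lam)) ^ (2 * (t + 1)) * opNorm (S n - S 0) := by
        have h4 : 2 * (t + 1) = 2 * t + 2 := by ring
        rw [h4, pow_add]; ring
      rw [← h3]
      exact le_trans hstep h2
  refine ⟨main, ?_⟩
  intro hA ε hε
  have hq1 : opNorm A / (1 + lam) < 1 :=
    lt_of_le_of_lt (div_le_self (opNorm_nonneg' A) (by linarith)) hA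
  have hbound : ∀ m : ℕ, opNorm (S m - S 0) ≤ 2 + opNorm (S 0) := by
    intro m
    cases m with
    | zero =>
      have h0 := opNorm_sub_self (S 0)
      have := opNorm_nonneg' (S 0)
      rw [h0]; linarith
    | succ m =>
      have hf := (step_facts (A := A) hR hRlam hlam_pos (hPSD m)).2
      have hSm : opNorm (S (m + 1)) ≤ 2 := by
        rw [hrec m, hf]
        have h3 := opNorm_sub_le' (1 : Matrix (Fin K) (Fin K) ℝ)
          ((A * S m * Aᵀ + R + 1)⁻¹)
        have h4 := (shifted_inv_facts hc (step_shift (A := A) hRlam (hPSD m))).2.2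
        have h5 : 1 / (1 + lam) ≤ 1 := by rw [div_le_one hc]; linarith
        have h6 := opNorm_one_le (K := K)
        linarith
      have h7 := opNorm_sub_le' (S (m + 1)) (S 0)
      linarith
  have hC : (0:ℝ) < 2 + opNorm (S 0) := by have := opNorm_nonneg' (S 0); linarith
  obtain ⟨N, hN⟩ := exists_pow_lt_of_lt_one (div_pos hε hC) hq1
  refine ⟨N, ?_⟩
  have key : ∀ s t : ℕ, N ≤ t → t ≤ s → opNorm (S s - S t) < ε := by
    intro s t hNt hts
    have h0 : t + (s - t) = s := by omega
    have h2 := main t (s - t)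
    rw [h0] at h2
    have h3 : (opNorm A / (1 + lam)) ^ (2 * t) ≤ (opNorm A / (1 + lam)) ^ N :=
      pow_le_pow_of_le_one hq0 hq1.le (by omega)
    have h4 : opNorm (S (s - t) - S 0) ≤ 2 + opNorm (S 0) := hbound _
    have h5 : (opNorm A / (1 + lam)) ^ N * (2 + opNorm (S 0)) < ε := (lt_div_iff₀ hC).mp hN
    calc opNorm (S s - S t)
        ≤ (opNorm A / (1 + lam)) ^ (2 * t) * opNorm (S (s - t) - S 0) := h2
    _ ≤ (opNorm A / (1 + lam)) ^ N * (2 + opNorm (S 0)) :=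
        mul_le_mul h3 h4 (opNorm_nonneg' _) (pow_nonneg hq0 N)
    _ < ε := h5
  intro s t hs ht
  rcases le_total t s with h | h
  · exact key s t ht h
  · rw [opNorm_sub_rev]; exact key t s hs h
end

section
/- Let A be a real K×K matrix, μ ∈ ℝ^K, and let Σ and R be symmetric positive definite real K×K matrices; set S := A Σ Aᵀ + R. Then for all x, y ∈ ℝ^K, ∫_{ℝ^K} N(x'; μ, Σ) · N(x; A x', R) · N(y; x, I) dx' = N(y; A μ, S + I) · N(x; μ', Σ'), where Σ' := S(S + I)⁻¹ and μ' := (S + I)⁻¹ A μ + Σ' y; moreover Σ' is symmetric positive definite. (This is the forward-variable recursion: a Gaussian forward variable stays Gaussian, with mean and covariance updated by these formulas, and the accumulated scalar factor equals N(y; A μ, S + I).) -/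
open Matrix MeasureTheory Real

/-- The Gaussian density `N(x; m, S)` on `ℝ^K` with mean `m` and (symmetric positive
definite) covariance matrix `S`. -/
noncomputable def gaussDensity {K : ℕ} (m : Fin K → ℝ) (S : Matrix (Fin K) (Fin K) ℝ)
    (x : Fin K → ℝ) : ℝ :=
  (Real.sqrt ((2 * Real.pi) ^ K * S.det))⁻¹ *
    Real.exp (-(1 / 2 : ℝ) * ((x - m) ⬝ᵥ (S⁻¹ *ᵥ (x - m))))

namespace ForwardAux

variable {K : ℕ}

lemma posDef_one' : (1 : Matrix (Fin K) (Fin K) ℝ).PosDef := by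
  exact Matrix.PosDef.one

lemma posdef_transpose {M : Matrix (Fin K) (Fin K) ℝ} (h : M.PosDef) : Mᵀ = M := by
  have := h.isHermitian
  simpa [Matrix.IsHermitian] using this

lemma dot_symm (M : Matrix (Fin K) (Fin K) ℝ) (hM : Mᵀ = M) (u w : Fin K → ℝ) :
    u ⬝ᵥ (M *ᵥ w) = w ⬝ᵥ (M *ᵥ u) := by
  rw [Matrix.dotProduct_mulVec, ← Matrix.mulVec_transpose, hM, dotProduct_comm]

lemma mulVec_dot' (B : Matrix (Fin K) (Fin K) ℝ) (u w : Fin K → ℝ) :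
    (B *ᵥ u) ⬝ᵥ w = u ⬝ᵥ (Bᵀ *ᵥ w) := by
  rw [Matrix.dotProduct_mulVec, Matrix.vecMul_transpose]

lemma sandwich (B B' M : Matrix (Fin K) (Fin K) ℝ) (u w : Fin K → ℝ) :
    (B *ᵥ u) ⬝ᵥ (M *ᵥ (B' *ᵥ w)) = u ⬝ᵥ ((Bᵀ * M * B') *ᵥ w) := by
  rw [mulVec_dot', Matrix.mulVec_mulVec, Matrix.mulVec_mulVec]

lemma quad_expand (M : Matrix (Fin K) (Fin K) ℝ) (hM : Mᵀ = M) (u w : Fin K → ℝ) :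
    (u - w) ⬝ᵥ (M *ᵥ (u - w))
      = u ⬝ᵥ (M *ᵥ u) - 2 * ((M *ᵥ w) ⬝ᵥ u) + w ⬝ᵥ (M *ᵥ w) := by
  rw [Matrix.mulVec_sub, dotProduct_sub, sub_dotProduct, sub_dotProduct]
  rw [dot_symm M hM w u, dotProduct_comm (M *ᵥ w) u]
  ring

lemma integral_gauss_pi :
    ∫ u : Fin K → ℝ, Real.exp (-(1/2 : ℝ) * (u ⬝ᵥ u)) = Real.sqrt ((2 * Real.pi) ^ K) := by
  have h := (EuclideanSpace.volume_preserving_symm_measurableEquiv_toLp (Fin K)).integral_comp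
    (MeasurableEquiv.toLp 2 (Fin K → ℝ)).symm.measurableEmbedding
    (fun u : Fin K → ℝ => Real.exp (-(1/2 : ℝ) * (u ⬝ᵥ u)))
  rw [← h]
  have h2 : ∀ e : EuclideanSpace ℝ (Fin K),
      ((MeasurableEquiv.toLp 2 (Fin K → ℝ)).symm e) ⬝ᵥ ((MeasurableEquiv.toLp 2 (Fin K → ℝ)).symm e)
        = ‖e‖ ^ 2 := by
    intro e
    rw [EuclideanSpace.norm_eq, Real.sq_sqrt (by positivity)]
    simp [dotProduct, sq]
  simp only [h2]
  have h3 := GaussianFourier.integral_rexp_neg_mul_sq_norm (V := EuclideanSpace ℝ (Fin K))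
    (b := (1/2 : ℝ)) (by norm_num)
  rw [h3, finrank_euclideanSpace_fin]
  rw [Real.sqrt_eq_rpow, ← Real.rpow_natCast (2 * Real.pi) K, ← Real.rpow_mul (by positivity)]
  rw [show π / (1/2 : ℝ) = 2 * π by ring, mul_one_div]

open scoped MatrixOrder in
lemma integral_gauss_quad (P : Matrix (Fin K) (Fin K) ℝ) (hP : P.PosDef) :
    ∫ v : Fin K → ℝ, Real.exp (-(1/2 : ℝ) * (v ⬝ᵥ P *ᵥ v))
      = Real.sqrt ((2 * Real.pi) ^ K / P.det) := by
  set Q := CFC.sqrt P with hQdef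
  have hQsym : Qᵀ = Q := by
    have := (CFC.sqrt_nonneg P).posSemidef.isHermitian
    simpa [Matrix.IsHermitian] using this
  have hQQ : Q * Q = P := CFC.sqrt_mul_sqrt_self P hP.posSemidef.nonneg
  have hdetQsq : Q.det * Q.det = P.det := by rw [← Matrix.det_mul, hQQ]
  have hdetQne : Q.det ≠ 0 := by
    intro h
    have := hP.det_pos
    rw [← hdetQsq, h, mul_zero] at this
    exact lt_irrefl _ this
  have habs : |Q.det| = Real.sqrt P.det := by
    rw [← hdetQsq, ← sq, Real.sqrt_sq_eq_abs]
  have hquad : ∀ v : Fin K → ℝ, v ⬝ᵥ P *ᵥ v = (Q *ᵥ v) ⬝ᵥ (Q *ᵥ v) := by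
    intro v
    rw [mulVec_dot', Matrix.mulVec_mulVec, hQsym, hQQ]
  simp only [hquad]
  have hdet' : LinearMap.det (Matrix.toLin' Q) ≠ 0 := by
    rwa [LinearMap.det_toLin']
  have hmap := Real.map_linearMap_volume_pi_eq_smul_volume_pi hdet'
  rw [LinearMap.det_toLin'] at hmap
  have hg : Continuous fun u : Fin K → ℝ => Real.exp (-(1/2 : ℝ) * (u ⬝ᵥ u)) := by
    simp only [dotProduct]
    fun_prop
  have hQv : ∀ v : Fin K → ℝ, Q *ᵥ v = Matrix.toLin' Q v := by
    intro v; simp [Matrix.toLin'_apply]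
  set g : (Fin K → ℝ) → ℝ := fun u => Real.exp (-(1/2 : ℝ) * (u ⬝ᵥ u)) with hgdef
  have h1 : ∫ u, g u ∂(Measure.map (⇑(Matrix.toLin' Q)) volume) = ∫ v, g ((Matrix.toLin' Q) v) :=
    MeasureTheory.integral_map ((Matrix.toLin' Q).continuous_of_finiteDimensional.aemeasurable)
      (hg.aestronglyMeasurable)
  rw [hmap, MeasureTheory.integral_smul_measure, ENNReal.toReal_ofReal (by positivity)] at h1
  have key : ∫ v : Fin K → ℝ, Real.exp (-(1/2 : ℝ) * ((Q *ᵥ v) ⬝ᵥ (Q *ᵥ v)))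
      = |Q.det⁻¹| * ∫ u : Fin K → ℝ, Real.exp (-(1/2 : ℝ) * (u ⬝ᵥ u)) := by
    simp only [← hQv, hgdef] at h1
    rw [← h1, smul_eq_mul]
  rw [key, integral_gauss_pi, abs_inv, habs]
  rw [Real.sqrt_div (by positivity : (0:ℝ) ≤ (2*Real.pi)^K), div_eq_inv_mul]

lemma integral_gauss_complete (P : Matrix (Fin K) (Fin K) ℝ) (hP : P.PosDef) (m : Fin K → ℝ) :
    ∫ v : Fin K → ℝ, Real.exp (-(1/2 : ℝ) * ((v - m) ⬝ᵥ (P *ᵥ (v - m))))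
      = Real.sqrt ((2 * Real.pi) ^ K / P.det) := by
  rw [← integral_add_right_eq_self
      (fun v : Fin K → ℝ => Real.exp (-(1/2 : ℝ) * ((v - m) ⬝ᵥ (P *ᵥ (v - m))))) m]
  simp only [add_sub_cancel_right]
  exact integral_gauss_quad P hP

lemma exponent_E1 (A Ci Ri T J : Matrix (Fin K) (Fin K) ℝ)
    (hCit : Ciᵀ = Ci) (hRit : Riᵀ = Ri) (hTt : Tᵀ = T) (hJt : Jᵀ = J)
    (hPJ : (Ci + Aᵀ * Ri * A) * J = 1)
    (hW1 : Ri - Ri * A * J * (Aᵀ * Ri) = T)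
    (hW2 : Ci * J * (Aᵀ * Ri) = Aᵀ * T)
    (hW3 : Ci - Ci * J * Ci = Aᵀ * T * A)
    (μ x v : Fin K → ℝ) :
    (v - μ) ⬝ᵥ (Ci *ᵥ (v - μ)) + (x - A *ᵥ v) ⬝ᵥ (Ri *ᵥ (x - A *ᵥ v))
      = (v - J *ᵥ (Ci *ᵥ μ + (Aᵀ * Ri) *ᵥ x)) ⬝ᵥ
          ((Ci + Aᵀ * Ri * A) *ᵥ (v - J *ᵥ (Ci *ᵥ μ + (Aᵀ * Ri) *ᵥ x)))
        + (x - A *ᵥ μ) ⬝ᵥ (T *ᵥ (x - A *ᵥ μ)) := by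
  have hPt : (Ci + Aᵀ * Ri * A)ᵀ = Ci + Aᵀ * Ri * A := by
    simp [Matrix.transpose_add, Matrix.transpose_mul, hCit, hRit, Matrix.mul_assoc]
  set b : Fin K → ℝ := Ci *ᵥ μ + (Aᵀ * Ri) *ᵥ x with hb
  rw [quad_expand Ci hCit v μ, quad_expand Ri hRit x (A *ᵥ v),
      quad_expand _ hPt v (J *ᵥ b), quad_expand T hTt x (A *ᵥ μ)]
  have hPb : (Ci + Aᵀ * Ri * A) *ᵥ (J *ᵥ b) = b := by
    rw [Matrix.mulVec_mulVec, hPJ, Matrix.one_mulVec]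
  rw [hPb]
  have hconst : (J *ᵥ b) ⬝ᵥ b = b ⬝ᵥ (J *ᵥ b) := dotProduct_comm _ _
  rw [hconst]
  have hbJb : b ⬝ᵥ (J *ᵥ b)
      = μ ⬝ᵥ ((Ci * J * Ci) *ᵥ μ) + 2 * (μ ⬝ᵥ ((Ci * J * (Aᵀ * Ri)) *ᵥ x))
        + x ⬝ᵥ (((Aᵀ * Ri)ᵀ * J * (Aᵀ * Ri)) *ᵥ x) := by
    rw [hb]
    rw [Matrix.mulVec_add, dotProduct_add, add_dotProduct, add_dotProduct]
    rw [show (Ci *ᵥ μ) ⬝ᵥ (J *ᵥ (Ci *ᵥ μ)) = μ ⬝ᵥ ((Ciᵀ * J * Ci) *ᵥ μ) from sandwich ..,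
        show (Ci *ᵥ μ) ⬝ᵥ (J *ᵥ ((Aᵀ * Ri) *ᵥ x)) = μ ⬝ᵥ ((Ciᵀ * J * (Aᵀ * Ri)) *ᵥ x) from
          sandwich ..,
        show ((Aᵀ * Ri) *ᵥ x) ⬝ᵥ (J *ᵥ (Ci *ᵥ μ)) = x ⬝ᵥ (((Aᵀ * Ri)ᵀ * J * Ci) *ᵥ μ) from
          sandwich ..,
        show ((Aᵀ * Ri) *ᵥ x) ⬝ᵥ (J *ᵥ ((Aᵀ * Ri) *ᵥ x))
            = x ⬝ᵥ (((Aᵀ * Ri)ᵀ * J * (Aᵀ * Ri)) *ᵥ x) from sandwich ..]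
    rw [hCit]
    have hsw : x ⬝ᵥ (((Aᵀ * Ri)ᵀ * J * Ci) *ᵥ μ) = μ ⬝ᵥ ((Ci * J * (Aᵀ * Ri)) *ᵥ x) := by
      rw [Matrix.dotProduct_mulVec, ← Matrix.mulVec_transpose]
      rw [show ((Aᵀ * Ri)ᵀ * J * Ci)ᵀ = Ci * J * (Aᵀ * Ri) by
        simp [Matrix.transpose_mul, hCit, hJt, Matrix.mul_assoc], dotProduct_comm]
    rw [hsw]
    ring
  rw [hbJb]
  rw [show ∀ w : Fin K → ℝ, w ⬝ᵥ ((Ci + Aᵀ * Ri * A) *ᵥ w)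
        = w ⬝ᵥ (Ci *ᵥ w) + w ⬝ᵥ ((Aᵀ * Ri * A) *ᵥ w) from fun w => by
      rw [Matrix.add_mulVec, dotProduct_add]]
  rw [show (A *ᵥ v) ⬝ᵥ (Ri *ᵥ (A *ᵥ v)) = v ⬝ᵥ ((Aᵀ * Ri * A) *ᵥ v) from sandwich ..]
  rw [show (A *ᵥ μ) ⬝ᵥ (T *ᵥ (A *ᵥ μ)) = μ ⬝ᵥ ((Aᵀ * T * A) *ᵥ μ) from sandwich ..]
  rw [show (Ri *ᵥ (A *ᵥ v)) ⬝ᵥ x = ((Aᵀ * Ri) *ᵥ x) ⬝ᵥ v from by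
    rw [Matrix.mulVec_mulVec, mulVec_dot', Matrix.transpose_mul, hRit, dotProduct_comm]]
  rw [show (T *ᵥ (A *ᵥ μ)) ⬝ᵥ x = μ ⬝ᵥ ((Aᵀ * T) *ᵥ x) from by
    rw [Matrix.mulVec_mulVec, mulVec_dot', Matrix.transpose_mul, hTt]]
  rw [hb, add_dotProduct]
  rw [show Ci * J * Ci = Ci - Aᵀ * T * A from by rw [← hW3, sub_sub_cancel]]
  rw [show (Aᵀ * Ri)ᵀ * J * (Aᵀ * Ri) = Ri - T from by
    rw [Matrix.transpose_mul, Matrix.transpose_transpose, hRit, ← hW1, sub_sub_cancel]]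
  rw [hW2]
  rw [Matrix.sub_mulVec, dotProduct_sub, Matrix.sub_mulVec, dotProduct_sub]
  ring

lemma exponent_E2 (T W Sig : Matrix (Fin K) (Fin K) ℝ)
    (hTt : Tᵀ = T) (hWt : Wᵀ = W) (hSigt : Sigᵀ = Sig)
    (hWT : W * T = T - W) (hSigW : Sig = 1 - W) (hSigT : Sig * T = W)
    (hG1a : (1 + T) * W = T) (hG1b : (1 + T) * Sig = 1)
    (m x y : Fin K → ℝ) :
    (x - m) ⬝ᵥ (T *ᵥ (x - m)) + (y - x) ⬝ᵥ (y - x)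
      = (y - m) ⬝ᵥ (W *ᵥ (y - m))
        + (x - (W *ᵥ m + Sig *ᵥ y)) ⬝ᵥ ((1 + T) *ᵥ (x - (W *ᵥ m + Sig *ᵥ y))) := by
  have h1Tt : (1 + T)ᵀ = 1 + T := by simp [hTt]
  set p : Fin K → ℝ := W *ᵥ m + Sig *ᵥ y with hp
  rw [quad_expand T hTt x m, quad_expand W hWt y m, quad_expand _ h1Tt x p]
  have hTp : (1 + T) *ᵥ p = T *ᵥ m + y := by
    rw [hp, Matrix.mulVec_add, Matrix.mulVec_mulVec, Matrix.mulVec_mulVec, hG1a, hG1b,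
      Matrix.one_mulVec]
  rw [hTp]
  have hpdot : p ⬝ᵥ (T *ᵥ m + y)
      = (m ⬝ᵥ (T *ᵥ m) - m ⬝ᵥ (W *ᵥ m)) + 2 * (m ⬝ᵥ (W *ᵥ y))
        + (y ⬝ᵥ y - y ⬝ᵥ (W *ᵥ y)) := by
    rw [hp, dotProduct_add, add_dotProduct, add_dotProduct]
    rw [show (W *ᵥ m) ⬝ᵥ (T *ᵥ m) = m ⬝ᵥ ((W * T) *ᵥ m) from by
      rw [mulVec_dot', hWt, Matrix.mulVec_mulVec]]
    rw [hWT, Matrix.sub_mulVec, dotProduct_sub]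
    rw [show (W *ᵥ m) ⬝ᵥ y = m ⬝ᵥ (W *ᵥ y) from by rw [mulVec_dot', hWt]]
    rw [show (Sig *ᵥ y) ⬝ᵥ (T *ᵥ m) = m ⬝ᵥ (W *ᵥ y) from by
      rw [mulVec_dot', hSigt, Matrix.mulVec_mulVec, hSigT, dot_symm W hWt]]
    rw [show (Sig *ᵥ y) ⬝ᵥ y = y ⬝ᵥ y - y ⬝ᵥ (W *ᵥ y) from by
      rw [mulVec_dot', hSigt, hSigW, Matrix.sub_mulVec, dotProduct_sub, Matrix.one_mulVec]]
    ring
  rw [hpdot]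
  rw [show ∀ w : Fin K → ℝ, w ⬝ᵥ ((1 + T) *ᵥ w) = w ⬝ᵥ w + w ⬝ᵥ (T *ᵥ w) from fun w => by
    rw [Matrix.add_mulVec, dotProduct_add, Matrix.one_mulVec]]
  rw [show (T *ᵥ m + y) ⬝ᵥ x = (T *ᵥ m) ⬝ᵥ x + y ⬝ᵥ x from add_dotProduct ..]
  rw [show (y - x) ⬝ᵥ (y - x) = y ⬝ᵥ y - 2 * (y ⬝ᵥ x) + x ⬝ᵥ x from by
    rw [dotProduct_sub, sub_dotProduct, sub_dotProduct, dotProduct_comm x y]; ring]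
  rw [show (W *ᵥ m) ⬝ᵥ y = m ⬝ᵥ (W *ᵥ y) from by rw [mulVec_dot', hWt]]
  ring

end ForwardAux

/-- the forward-variable recursion.  With `S = A Σ Aᵀ + R`,
`Σ' = S (S + I)⁻¹` and `μ' = (S + I)⁻¹ A μ + Σ' y`, one has for all `x, y`:
`∫ N(x'; μ, Σ) N(x; A x', R) N(y; x, I) dx' = N(y; A μ, S + I) · N(x; μ', Σ')`,
and `Σ'` is symmetric positive definite. -/
theorem forward_variable_recursion {K : ℕ}
    (A C R : Matrix (Fin K) (Fin K) ℝ) (μ : Fin K → ℝ)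
    (hC : C.PosDef) (hR : R.PosDef) :
    ((A * C * Aᵀ + R) * (A * C * Aᵀ + R + 1)⁻¹).PosDef ∧
      ∀ x y : Fin K → ℝ,
        (∫ x' : Fin K → ℝ,
            gaussDensity μ C x' * gaussDensity (A *ᵥ x') R x * gaussDensity x 1 y) =
          gaussDensity (A *ᵥ μ) (A * C * Aᵀ + R + 1) y *
            gaussDensity
              ((A * C * Aᵀ + R + 1)⁻¹ *ᵥ (A *ᵥ μ) +
                ((A * C * Aᵀ + R) * (A * C * Aᵀ + R + 1)⁻¹) *ᵥ y)
              ((A * C * Aᵀ + R) * (A * C * Aᵀ + R + 1)⁻¹) x := by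
  have hCt : Cᵀ = C := hC.isHermitian
  have hRt : Rᵀ = R := hR.isHermitian
  have hdC : IsUnit C.det := hC.det_pos.ne'.isUnit
  have hdR : IsUnit R.det := hR.det_pos.ne'.isUnit
  have hconjA : Aᴴ = Aᵀ := by ext i j; simp [Matrix.conjTranspose_apply]
  -- S and its posdef
  set S : Matrix (Fin K) (Fin K) ℝ := A * C * Aᵀ + R with hSdef
  have hSpsd : (A * C * Aᵀ).PosSemidef := by
    have := hC.posSemidef.mul_mul_conjTranspose_same A
    rwa [hconjA] at this
  have hS : S.PosDef := Matrix.PosDef.posSemidef_add hSpsd hR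
  have hSt : Sᵀ = S := hS.isHermitian
  have hdS : IsUnit S.det := hS.det_pos.ne'.isUnit
  set S1 : Matrix (Fin K) (Fin K) ℝ := S + 1 with hS1def
  have hS1 : S1.PosDef := hS.add (by
    exact Matrix.PosDef.one)
  have hdS1 : IsUnit S1.det := hS1.det_pos.ne'.isUnit
  set Ci : Matrix (Fin K) (Fin K) ℝ := C⁻¹ with hCidef
  set Ri : Matrix (Fin K) (Fin K) ℝ := R⁻¹ with hRidef
  set T : Matrix (Fin K) (Fin K) ℝ := S⁻¹ with hTdef
  set W : Matrix (Fin K) (Fin K) ℝ := S1⁻¹ with hWdef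
  set Sig : Matrix (Fin K) (Fin K) ℝ := S * W with hSigdef
  have hCi : Ci.PosDef := hC.inv
  have hRi : Ri.PosDef := hR.inv
  have hT : T.PosDef := hS.inv
  have hW : W.PosDef := hS1.inv
  have hCit : Ciᵀ = Ci := hCi.isHermitian
  have hRit : Riᵀ = Ri := hRi.isHermitian
  have hTt : Tᵀ = T := hT.isHermitian
  have hWt : Wᵀ = W := hW.isHermitian
  -- cancellation rules
  have hCiC : Ci * C = 1 := Matrix.nonsing_inv_mul _ hdC
  have hCCi : C * Ci = 1 := Matrix.mul_nonsing_inv _ hdC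
  have hRiR : Ri * R = 1 := Matrix.nonsing_inv_mul _ hdR
  have hRRi : R * Ri = 1 := Matrix.mul_nonsing_inv _ hdR
  have hTS : T * S = 1 := Matrix.nonsing_inv_mul _ hdS
  have hST : S * T = 1 := Matrix.mul_nonsing_inv _ hdS
  have hWS1 : W * S1 = 1 := Matrix.nonsing_inv_mul _ hdS1
  have hS1W : S1 * W = 1 := Matrix.mul_nonsing_inv _ hdS1
  have cCiC : ∀ X : Matrix (Fin K) (Fin K) ℝ, Ci * (C * X) = X := fun X => by
    rw [← Matrix.mul_assoc, hCiC, Matrix.one_mul]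
  have cCCi : ∀ X : Matrix (Fin K) (Fin K) ℝ, C * (Ci * X) = X := fun X => by
    rw [← Matrix.mul_assoc, hCCi, Matrix.one_mul]
  have cRiR : ∀ X : Matrix (Fin K) (Fin K) ℝ, Ri * (R * X) = X := fun X => by
    rw [← Matrix.mul_assoc, hRiR, Matrix.one_mul]
  have cRRi : ∀ X : Matrix (Fin K) (Fin K) ℝ, R * (Ri * X) = X := fun X => by
    rw [← Matrix.mul_assoc, hRRi, Matrix.one_mul]
  have cTS : ∀ X : Matrix (Fin K) (Fin K) ℝ, T * (S * X) = X := fun X => by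
    rw [← Matrix.mul_assoc, hTS, Matrix.one_mul]
  have cST : ∀ X : Matrix (Fin K) (Fin K) ℝ, S * (T * X) = X := fun X => by
    rw [← Matrix.mul_assoc, hST, Matrix.one_mul]
  have hACA' : A * C * Aᵀ = S - R := by rw [hSdef, add_sub_cancel_right]
  have cACA : ∀ X : Matrix (Fin K) (Fin K) ℝ, A * (C * (Aᵀ * X)) = S * X - R * X := fun X => by
    rw [← Matrix.mul_assoc, ← Matrix.mul_assoc, hACA', Matrix.sub_mul]
  have cACA0 : A * (C * Aᵀ) = S - R := by rw [← Matrix.mul_assoc, hACA']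
  -- Woodbury block
  set J : Matrix (Fin K) (Fin K) ℝ := C - C * Aᵀ * T * (A * C) with hJdef
  have hJt : Jᵀ = J := by
    rw [hJdef]
    simp [Matrix.transpose_sub, Matrix.transpose_mul, hCt, hTt, Matrix.mul_assoc]
  have hPJ : (Ci + Aᵀ * Ri * A) * J = 1 := by
    rw [hJdef]
    simp only [Matrix.add_mul, Matrix.mul_sub, Matrix.sub_mul, Matrix.mul_add,
      Matrix.mul_assoc, cCiC, cCCi, cRiR, cRRi, cTS, cST, cACA, cACA0,
      Matrix.mul_one, Matrix.one_mul, hCiC, hCCi, hRiR, hRRi, hTS, hST]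
    abel
  have hW1 : Ri - Ri * A * J * (Aᵀ * Ri) = T := by
    rw [hJdef]
    simp only [Matrix.add_mul, Matrix.mul_sub, Matrix.sub_mul, Matrix.mul_add,
      Matrix.mul_assoc, cCiC, cCCi, cRiR, cRRi, cTS, cST, cACA, cACA0,
      Matrix.mul_one, Matrix.one_mul, hCiC, hCCi, hRiR, hRRi, hTS, hST]
    abel
  have hW2 : Ci * J * (Aᵀ * Ri) = Aᵀ * T := by
    rw [hJdef]
    simp only [Matrix.add_mul, Matrix.mul_sub, Matrix.sub_mul, Matrix.mul_add,
      Matrix.mul_assoc, cCiC, cCCi, cRiR, cRRi, cTS, cST, cACA, cACA0,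
      Matrix.mul_one, Matrix.one_mul, hCiC, hCCi, hRiR, hRRi, hTS, hST]
    abel
  have hW3 : Ci - Ci * J * Ci = Aᵀ * T * A := by
    rw [hJdef]
    simp only [Matrix.add_mul, Matrix.mul_sub, Matrix.sub_mul, Matrix.mul_add,
      Matrix.mul_assoc, cCiC, cCCi, cRiR, cRRi, cTS, cST, cACA, cACA0,
      Matrix.mul_one, Matrix.one_mul, hCiC, hCCi, hRiR, hRRi, hTS, hST]
    abel
  -- stage 2 identities
  have hSW1' : S * W + W = 1 := by
    have h := hS1W
    rwa [hS1def, Matrix.add_mul, Matrix.one_mul] at h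
  have hWT : W * T = T - W := by
    have h : W * (S1 * T) = T := by rw [← Matrix.mul_assoc, hWS1, Matrix.one_mul]
    rw [hS1def, Matrix.add_mul, hST, Matrix.one_mul, Matrix.mul_add, Matrix.mul_one] at h
    rw [eq_sub_iff_add_eq, add_comm]; exact h
  have h2 : S * S1 = S1 * S := by
    rw [hS1def]; noncomm_ring
  have hcommSW : W * S = S * W := by
    calc W * S = (W * S) * (S1 * W) := by rw [hS1W, Matrix.mul_one]
      _ = W * ((S * S1) * W) := by simp only [Matrix.mul_assoc]
      _ = W * ((S1 * S) * W) := by rw [h2]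
      _ = (W * S1) * (S * W) := by simp only [Matrix.mul_assoc]
      _ = S * W := by rw [hWS1, Matrix.one_mul]
  have hSigW : Sig = 1 - W := by rw [hSigdef, ← hSW1']; abel
  have hSigT : Sig * T = W := by
    rw [hSigdef, Matrix.mul_assoc, hWT, Matrix.mul_sub, hST, ← hSW1']; abel
  have h3 : T * W = W * T := by
    calc T * W = (T * W) * (S * T) := by rw [hST, Matrix.mul_one]
      _ = T * ((W * S) * T) := by simp only [Matrix.mul_assoc]
      _ = T * ((S * W) * T) := by rw [hcommSW]
      _ = (T * S) * (W * T) := by simp only [Matrix.mul_assoc]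
      _ = W * T := by rw [hTS, Matrix.one_mul]
  have hG1a : (1 + T) * W = T := by
    rw [Matrix.add_mul, Matrix.one_mul, h3, hWT]; abel
  have hG1b : (1 + T) * Sig = 1 := by
    rw [hSigdef, Matrix.add_mul, Matrix.one_mul, ← Matrix.mul_assoc, hTS, Matrix.one_mul,
      hSW1']
  have h4 : W * (1 + T) = T := by rw [Matrix.mul_add, Matrix.mul_one, hWT]; abel
  have hG1b' : Sig * (1 + T) = 1 := by rw [hSigdef, Matrix.mul_assoc, h4, hST]
  have hSigt : Sigᵀ = Sig := by
    rw [hSigdef, Matrix.transpose_mul, hWt, hSt, hcommSW]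
  have hone : (1 : Matrix (Fin K) (Fin K) ℝ).PosDef := by
    exact Matrix.PosDef.one
  have h1T : (1 + T : Matrix (Fin K) (Fin K) ℝ).PosDef := Matrix.PosDef.add hone hT
  have hSiginv : Sig⁻¹ = 1 + T := Matrix.inv_eq_left_inv hG1b
  have hSigPD : Sig.PosDef := by
    have e : (1 + T)⁻¹ = Sig := Matrix.inv_eq_right_inv hG1b
    rw [← e]; exact h1T.inv
  have hPsd : (Aᵀ * Ri * A).PosSemidef := by
    have := hRi.posSemidef.conjTranspose_mul_mul_same A
    rwa [hconjA] at this
  have hP : (Ci + Aᵀ * Ri * A).PosDef := Matrix.PosDef.add_posSemidef hCi hPsd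
  have hdetS : S.det = R.det * (C.det * (Ci + Aᵀ * Ri * A).det) := by
    have h5 : S = R * (1 + (Ri * A) * (C * Aᵀ)) := by
      rw [Matrix.mul_add, Matrix.mul_one, Matrix.mul_assoc Ri A (C * Aᵀ),
        Matrix.mul_nonsing_inv_cancel_left R _ hdR, hSdef, Matrix.mul_assoc]
      abel
    have h6 : (1 : Matrix (Fin K) (Fin K) ℝ) + (C * Aᵀ) * (Ri * A) = C * (Ci + Aᵀ * Ri * A) := by
      rw [Matrix.mul_add, hCCi]
      congr 1
      simp only [Matrix.mul_assoc]
    rw [h5, Matrix.det_mul, Matrix.det_one_add_mul_comm, h6, Matrix.det_mul]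
  have hdetSig : Sig.det = S.det * S1.det⁻¹ := by
    rw [hSigdef, Matrix.det_mul, hWdef, Matrix.det_nonsing_inv, Ring.inverse_eq_inv]
  refine ⟨hSigPD, fun x y => ?_⟩
  set P : Matrix (Fin K) (Fin K) ℝ := Ci + Aᵀ * Ri * A with hPdef
  set mstar : Fin K → ℝ := J *ᵥ (Ci *ᵥ μ + (Aᵀ * Ri) *ᵥ x) with hmstar
  set μp : Fin K → ℝ := W *ᵥ (A *ᵥ μ) + Sig *ᵥ y with hμpdef
  set rest : ℝ := (y - A *ᵥ μ) ⬝ᵥ (W *ᵥ (y - A *ᵥ μ)) + (x - μp) ⬝ᵥ ((1 + T) *ᵥ (x - μp))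
    with hrest
  set c0 : ℝ := (Real.sqrt ((2 * Real.pi) ^ K * C.det))⁻¹ *
      (Real.sqrt ((2 * Real.pi) ^ K * R.det))⁻¹ *
      (Real.sqrt ((2 * Real.pi) ^ K * (1 : Matrix (Fin K) (Fin K) ℝ).det))⁻¹ with hc0
  clear_value S S1 Ci Ri T W Sig J P mstar μp rest c0
  have hpoint : ∀ v : Fin K → ℝ,
      gaussDensity μ C v * gaussDensity (A *ᵥ v) R x * gaussDensity x 1 y
        = (c0 * Real.exp (-(1/2 : ℝ) * rest)) *
            Real.exp (-(1/2 : ℝ) * ((v - mstar) ⬝ᵥ (P *ᵥ (v - mstar)))) := by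
    intro v
    simp only [gaussDensity, inv_one, Matrix.one_mulVec, ← hCidef, ← hRidef]
    have hPJ' : (Ci + Aᵀ * Ri * A) * J = 1 := by rw [← hPdef]; exact hPJ
    have hW1' : Ri - Ri * A * J * (Aᵀ * Ri) = T := hW1
    have e1 := ForwardAux.exponent_E1 A Ci Ri T J hCit hRit hTt hJt hPJ' hW1 hW2 hW3 μ x v
    have e2 := ForwardAux.exponent_E2 T W Sig hTt hWt hSigt hWT hSigW hSigT hG1a hG1b
      (A *ᵥ μ) x y
    have hsum : (v - μ) ⬝ᵥ (Ci *ᵥ (v - μ)) + (x - A *ᵥ v) ⬝ᵥ (Ri *ᵥ (x - A *ᵥ v))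
          + (y - x) ⬝ᵥ (y - x)
        = (v - mstar) ⬝ᵥ (P *ᵥ (v - mstar)) + rest := by
      rw [hrest, hμpdef, hPdef, hmstar, e1, add_assoc, e2]
    have hq2 : -(1/2 : ℝ) * ((v - μ) ⬝ᵥ (Ci *ᵥ (v - μ)))
          + -(1/2 : ℝ) * ((x - A *ᵥ v) ⬝ᵥ (Ri *ᵥ (x - A *ᵥ v)))
          + -(1/2 : ℝ) * ((y - x) ⬝ᵥ (y - x))
        = -(1/2 : ℝ) * rest + -(1/2 : ℝ) * ((v - mstar) ⬝ᵥ (P *ᵥ (v - mstar))) := by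
      linear_combination (-(1/2 : ℝ)) * hsum
    calc (Real.sqrt ((2 * Real.pi) ^ K * C.det))⁻¹ *
          Real.exp (-(1/2 : ℝ) * ((v - μ) ⬝ᵥ (Ci *ᵥ (v - μ)))) *
          ((Real.sqrt ((2 * Real.pi) ^ K * R.det))⁻¹ *
            Real.exp (-(1/2 : ℝ) * ((x - A *ᵥ v) ⬝ᵥ (Ri *ᵥ (x - A *ᵥ v))))) *
          ((Real.sqrt ((2 * Real.pi) ^ K * (1 : Matrix (Fin K) (Fin K) ℝ).det))⁻¹ *
            Real.exp (-(1/2 : ℝ) * ((y - x) ⬝ᵥ (y - x))))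
        = c0 * Real.exp (-(1/2 : ℝ) * ((v - μ) ⬝ᵥ (Ci *ᵥ (v - μ)))
            + -(1/2 : ℝ) * ((x - A *ᵥ v) ⬝ᵥ (Ri *ᵥ (x - A *ᵥ v)))
            + -(1/2 : ℝ) * ((y - x) ⬝ᵥ (y - x))) := by
          rw [Real.exp_add, Real.exp_add, hc0]; ring
      _ = c0 * (Real.exp (-(1/2 : ℝ) * rest) *
            Real.exp (-(1/2 : ℝ) * ((v - mstar) ⬝ᵥ (P *ᵥ (v - mstar))))) := by
          rw [hq2, Real.exp_add]
      _ = (c0 * Real.exp (-(1/2 : ℝ) * rest)) *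
            Real.exp (-(1/2 : ℝ) * ((v - mstar) ⬝ᵥ (P *ᵥ (v - mstar)))) := by ring
  rw [show (fun v : Fin K → ℝ =>
        gaussDensity μ C v * gaussDensity (A *ᵥ v) R x * gaussDensity x 1 y)
      = fun v : Fin K → ℝ => (c0 * Real.exp (-(1/2 : ℝ) * rest)) *
          Real.exp (-(1/2 : ℝ) * ((v - mstar) ⬝ᵥ (P *ᵥ (v - mstar)))) from funext hpoint]
  rw [MeasureTheory.integral_const_mul, ForwardAux.integral_gauss_complete P hP mstar]
  -- now the right-hand side
  simp only [gaussDensity, ← hWdef, hSiginv]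
  have hqsplit : Real.exp (-(1/2 : ℝ) * rest)
      = Real.exp (-(1/2 : ℝ) * ((y - A *ᵥ μ) ⬝ᵥ (W *ᵥ (y - A *ᵥ μ)))) *
        Real.exp (-(1/2 : ℝ) * ((x - μp) ⬝ᵥ ((1 + T) *ᵥ (x - μp)))) := by
    rw [← Real.exp_add, hrest]; ring_nf
  have hdP0 : 0 < P.det := hP.det_pos
  have hdC0 : 0 < C.det := hC.det_pos
  have hdR0 : 0 < R.det := hR.det_pos
  have hdS0 : 0 < S.det := hS.det_pos
  have hdS10 : 0 < S1.det := hS1.det_pos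
  have hdSig0 : 0 < Sig.det := hSigPD.det_pos
  have hconst : c0 * Real.sqrt ((2 * Real.pi) ^ K / P.det)
      = (Real.sqrt ((2 * Real.pi) ^ K * S1.det))⁻¹ *
        (Real.sqrt ((2 * Real.pi) ^ K * Sig.det))⁻¹ := by
    rw [hc0, Matrix.det_one]
    rw [← Real.sqrt_inv, ← Real.sqrt_inv, ← Real.sqrt_inv,
      ← Real.sqrt_mul (by positivity), ← Real.sqrt_mul (by positivity),
      ← Real.sqrt_mul (by positivity)]
    rw [← Real.sqrt_inv ((2 * Real.pi) ^ K * S1.det), ← Real.sqrt_inv,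
      ← Real.sqrt_mul (by positivity)]
    congr 1
    rw [hdetSig, hdetS]
    field_simp
  calc c0 * Real.exp (-(1/2 : ℝ) * rest) * Real.sqrt ((2 * Real.pi) ^ K / P.det)
      = (c0 * Real.sqrt ((2 * Real.pi) ^ K / P.det)) * Real.exp (-(1/2 : ℝ) * rest) := by
        ring
    _ = _ := by
        rw [hconst, hqsplit]
        ring
end

section
/- Let (Ω, 𝓕, μ) be a probability space with a filtration (𝓕_n)_{n∈ℕ}, and let (f_n)_{n∈ℕ} be a martingale with respect to this filtration and μ such that f_n ≥ 0 almost everywhere for every n, and ∫ f_0 dμ = 1. Then for every real c > 0, μ{ ω : ∃ n, f_n(ω) ≥ c } ≤ 1/c (Ville's maximal inequality for nonnegative martingales). -/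
open MeasureTheory

/-- Ville's maximal inequality.  If `(f_n)` is a nonnegative martingale
with `∫ f_0 dμ = 1` on a probability space, then for every `c > 0`,
`μ{ω : ∃ n, f_n(ω) ≥ c} ≤ 1/c`. -/
theorem ville_maximal_inequality {Ω : Type*} {m : MeasurableSpace Ω}
    (μ : Measure Ω) [IsProbabilityMeasure μ]
    (ℱ : Filtration ℕ m) (f : ℕ → Ω → ℝ)
    (hf : Martingale f ℱ μ)
    (hnonneg : ∀ n : ℕ, 0 ≤ᵐ[μ] f n)
    (hmean : ∫ ω, f 0 ω ∂μ = 1)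
    (c : ℝ) (hc : 0 < c) :
    μ {ω | ∃ n : ℕ, c ≤ f n ω} ≤ ENNReal.ofReal (1 / c) := by
  classical
  set ε : NNReal := ⟨c, hc.le⟩ with hε
  have hεc : (ε : ℝ) = c := rfl
  set A : ℕ → Set Ω := fun n =>
    {ω | (ε : ℝ) ≤ (Finset.range (n + 1)).sup' Finset.nonempty_range_add_one fun k => f k ω}
    with hA
  have hset : {ω | ∃ n : ℕ, c ≤ f n ω} = ⋃ n, A n := by
    ext ω
    simp only [Set.mem_setOf_eq, Set.mem_iUnion, hA, Finset.le_sup'_iff, Finset.mem_range, hεc]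
    constructor
    · rintro ⟨n, hn⟩; exact ⟨n, n, Nat.lt_succ_self n, hn⟩
    · rintro ⟨n, k, _, hk⟩; exact ⟨k, hk⟩
  -- each A n has small measure
  have key : ∀ n, μ (A n) ≤ ENNReal.ofReal (1 / c) := by
    intro n
    have h1 := smul_le_stoppedValue_hittingBtwn (μ := μ) hf.submartingale (ε := ε) n
    -- the stopped value is a.e. nonnegative
    have hστ : IsStoppingTime ℱ (fun ω ↦ (hittingBtwn f {y : ℝ | (ε : ℝ) ≤ y} 0 n ω : ℕ)) :=
      Adapted.isStoppingTime_hittingBtwn hf.stronglyAdapted.adapted measurableSet_Ici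
    have hbdd : ∀ ω, (hittingBtwn f {y : ℝ | (ε : ℝ) ≤ y} 0 n ω : ℕ) ≤ n := fun ω => hittingBtwn_le ω
    have hint : Integrable (stoppedValue f (fun ω ↦ (hittingBtwn f {y : ℝ | (ε : ℝ) ≤ y} 0 n ω : ℕ))) μ :=
      hf.submartingale.integrable_stoppedValue hστ (fun ω => WithTop.coe_le_coe.2 (hbdd ω))
    have hpos : 0 ≤ᵐ[μ] stoppedValue f (fun ω ↦ (hittingBtwn f {y : ℝ | (ε : ℝ) ≤ y} 0 n ω : ℕ)) := by
      filter_upwards [ae_all_iff.2 hnonneg] with ω hω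
      exact hω _
    have h2 : ∫ ω in A n, stoppedValue f (fun ω ↦ (hittingBtwn f {y : ℝ | (ε : ℝ) ≤ y} 0 n ω : ℕ)) ω ∂μ ≤
        ∫ ω, stoppedValue f (fun ω ↦ (hittingBtwn f {y : ℝ | (ε : ℝ) ≤ y} 0 n ω : ℕ)) ω ∂μ :=
      setIntegral_le_integral hint hpos
    -- expectation of stopped value equals expectation of f n (≤ direction suffices)
    have h3 : ∫ ω, stoppedValue f (fun ω ↦ (hittingBtwn f {y : ℝ | (ε : ℝ) ≤ y} 0 n ω : ℕ)) ω ∂μ ≤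
        ∫ ω, f n ω ∂μ := by
      have := hf.submartingale.expected_stoppedValue_mono hστ
        (isStoppingTime_const ℱ n) (fun ω => WithTop.coe_le_coe.2 (hbdd ω)) (N := n) (fun _ => le_rfl)
      exact this
    have h4 : ∫ ω, f n ω ∂μ = 1 := by
      have := hf.setIntegral_eq (Nat.zero_le n) (MeasurableSet.univ (α := Ω))
      rw [setIntegral_univ, setIntegral_univ, hmean] at this
      exact this.symm
    have h5 : ε • μ (A n) ≤ ENNReal.ofReal 1 := by
      refine h1.trans ?_
      exact ENNReal.ofReal_le_ofReal (h2.trans (h3.trans_eq h4))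
    -- conclude
    have hc' : (ε : ENNReal) ≠ 0 :=
      ENNReal.coe_ne_zero.2 (NNReal.coe_ne_zero.1 (by rw [hεc]; exact hc.ne'))
    rw [ENNReal.smul_def, smul_eq_mul] at h5
    have h6 : μ (A n) ≤ ENNReal.ofReal 1 / (ε : ENNReal) :=
      (ENNReal.le_div_iff_mul_le (Or.inl hc') (Or.inl ENNReal.coe_ne_top)).2
        (by rwa [mul_comm])
    refine h6.trans_eq ?_
    rw [ENNReal.ofReal_div_of_pos hc, ← hεc, ENNReal.ofReal_coe_nnreal]
  -- A is monotone, so the measure of the union is the sup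
  have hmono : Monotone A := by
    intro a b hab ω hω
    simp only [hA, Set.mem_setOf_eq] at hω ⊢
    exact hω.trans (Finset.sup'_mono _ (Finset.range_subset_range.2 (by omega))
      Finset.nonempty_range_add_one)
  rw [hset, hmono.measure_iUnion]
  exact iSup_le key
end
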